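/- For every real α > 0, C ≥ 1, and λ > 1, there exist positive integers p, n and a set K of at least λ^p vectors in {0,1}^n, each of Hamming weight exactly p, such that every subset K' ⊆ K with |K'| ≥ |K|^α satisfies dr(K') > C. -/

import Mathlib

def wt {n : ℕ} (x : Fin n → Bool) : ℕ := (Finset.univ.filter fun i => x i = true).card

noncomputable def dr {n : ℕ} (L : Finset (Fin n → Bool)) : ℝ :=
  ((sSup {d : ℕ | ∃ x ∈ L, ∃ y ∈ L, hammingDist x y = d} : ℕ) : ℝ) /
  ((sInf {d : ℕ | ∃ x ∈ L, ∃ y ∈ L, x ≠ y ∧ hammingDist x y = d} : ℕ) : ℝ)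

namespace S10
open Finset

abbrev Idx (L m : ℕ) := Σ j : Fin L, Fin (2 ^ (L - 1 - j.val)) × (Fin (j.val + 1) → Fin m)

def pre {L m : ℕ} (w : Fin L → Fin m) (j : Fin L) : Fin (j.val + 1) → Fin m :=
  fun k => w (Fin.castLE j.isLt k)

def phi {L m : ℕ} (w : Fin L → Fin m) (σ : Idx L m) : Bool :=
  decide (pre w σ.1 = σ.2.2)

noncomputable def psi (L m : ℕ) (w : Fin L → Fin m) : Fin (Fintype.card (Idx L m)) → Bool :=
  fun i => phi w ((Fintype.equivFin (Idx L m)).symm i)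

lemma count_one {β : Type*} [Fintype β] [DecidableEq β] (b : β) :
    (∑ a : β, if (decide (b = a)) = true then (1 : ℕ) else 0) = 1 := by
  simp only [decide_eq_true_eq]
  rw [Finset.sum_ite_eq]
  simp

lemma count_two {β : Type*} [Fintype β] [DecidableEq β] {b c : β} (h : b ≠ c) :
    (∑ a : β, if (decide (b = a)) ≠ (decide (c = a)) then (1 : ℕ) else 0) = 2 := by
  have key : ∀ a : β, ((decide (b = a)) ≠ (decide (c = a))) ↔ (a = b ∨ a = c) := by
    intro a
    simp only [ne_eq, decide_eq_decide]
    by_cases hab : a = b <;> by_cases hac : a = c <;> simp_all <;> tauto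
  calc (∑ a : β, if (decide (b = a)) ≠ (decide (c = a)) then (1 : ℕ) else 0)
      = ∑ a : β, if (a = b ∨ a = c) then (1 : ℕ) else 0 := by
        refine Finset.sum_congr rfl fun a _ => ?_
        simp only [key]
    _ = (Finset.univ.filter fun a : β => a = b ∨ a = c).card := by
        rw [Finset.card_filter]
    _ = ({b, c} : Finset β).card := by
        congr 1
        ext a
        simp
    _ = 2 := Finset.card_pair h

lemma count_ne {β : Type*} [Fintype β] [DecidableEq β] (b c : β) :
    (∑ a : β, if (decide (b = a)) ≠ (decide (c = a)) then (1 : ℕ) else 0)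
      = if b = c then 0 else 2 := by
  rcases eq_or_ne b c with h | h
  · simp [h]
  · rw [count_two h, if_neg h]

lemma wt_psi (L m : ℕ) (w : Fin L → Fin m) :
    wt (psi L m w) = ∑ j : Fin L, 2 ^ (L - 1 - j.val) := by
  classical
  rw [wt, Finset.card_filter]
  simp only [psi]
  erw [Equiv.sum_comp (Fintype.equivFin (Idx L m)).symm
    (fun σ : Idx L m => if phi w σ = true then (1 : ℕ) else 0)]
  rw [← Finset.univ_sigma_univ, Finset.sum_sigma]
  refine Finset.sum_congr rfl fun j _ => ?_
  rw [Fintype.sum_prod_type]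
  have h1 : ∀ r : Fin (2 ^ (L - 1 - j.val)), (∑ a : Fin (j.val + 1) → Fin m,
      if phi w ⟨j, (r, a)⟩ = true then (1 : ℕ) else 0) = 1 := by
    intro r
    simp only [phi]; convert count_one (pre w j) using 3 <;> simp
  rw [Finset.sum_congr rfl (fun r _ => h1 r), Finset.sum_const, smul_eq_mul, mul_one,
    Finset.card_univ, Fintype.card_fin]

lemma ham_psi (L m : ℕ) (w v : Fin L → Fin m) :
    hammingDist (psi L m w) (psi L m v)
      = ∑ j : Fin L, if pre w j = pre v j then 0 else 2 * 2 ^ (L - 1 - j.val) := by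
  classical
  rw [show hammingDist (psi L m w) (psi L m v)
      = (Finset.univ.filter fun i => psi L m w i ≠ psi L m v i).card from rfl,
    Finset.card_filter]
  simp only [psi]
  erw [Equiv.sum_comp (Fintype.equivFin (Idx L m)).symm
    (fun σ : Idx L m => if phi w σ ≠ phi v σ then (1 : ℕ) else 0)]
  rw [← Finset.univ_sigma_univ, Finset.sum_sigma]
  refine Finset.sum_congr rfl fun j _ => ?_
  rw [Fintype.sum_prod_type]
  have h1 : ∀ r : Fin (2 ^ (L - 1 - j.val)), (∑ a : Fin (j.val + 1) → Fin m,
      if phi w ⟨j, (r, a)⟩ ≠ phi v ⟨j, (r, a)⟩ then (1 : ℕ) else 0)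
      = if pre w j = pre v j then 0 else 2 := by
    intro r
    simp only [phi]; convert count_ne (pre w j) (pre v j) using 3 <;> simp
  rw [Finset.sum_congr rfl (fun r _ => h1 r), Finset.sum_const, smul_eq_mul,
    Finset.card_univ, Fintype.card_fin, mul_ite, mul_zero]
  rcases eq_or_ne (pre w j) (pre v j) with h | h
  · simp [h]
  · rw [if_neg h, if_neg h, mul_comm]

lemma geo : ∀ (k s : ℕ), (∑ j ∈ Finset.Ico s (s + k), 2 ^ (s + k - 1 - j)) = 2 ^ k - 1 := by
  intro k
  induction k with
  | zero => intro s; simp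
  | succ k ih =>
    intro s
    have hlt : s < s + (k + 1) := by omega
    rw [Finset.sum_eq_sum_Ico_succ_bot hlt]
    have h1 : (∑ j ∈ Finset.Ico (s + 1) (s + (k + 1)), 2 ^ (s + (k + 1) - 1 - j))
        = 2 ^ k - 1 := by
      have h := ih (s + 1)
      rwa [show s + 1 + k = s + (k + 1) from by omega] at h
    rw [h1, show s + (k + 1) - 1 - s = k from by omega]
    have h3 : 1 ≤ 2 ^ k := Nat.one_le_two_pow
    have h4 : (2 : ℕ) ^ (k + 1) = 2 * 2 ^ k := by ring
    omega

lemma sum_tail (L s : ℕ) (hs : s ≤ L) :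
    (∑ j ∈ Finset.Ico s L, 2 ^ (L - 1 - j)) = 2 ^ (L - s) - 1 := by
  have := geo (L - s) s
  have he : s + (L - s) = L := by omega
  rw [he] at this
  exact this

lemma sum_cond (L s : ℕ) (hs : s ≤ L) :
    (∑ j : Fin L, if s ≤ j.val then 2 * 2 ^ (L - 1 - j.val) else 0)
      = 2 * (2 ^ (L - s) - 1) := by
  rw [Fin.sum_univ_eq_sum_range (fun j => if s ≤ j then 2 * 2 ^ (L - 1 - j) else 0)]
  rw [← Finset.sum_filter]
  have hf : (Finset.range L).filter (fun j => s ≤ j) = Finset.Ico s L := by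
    ext j
    simp [Finset.mem_Ico, Finset.mem_range, and_comm]
  rw [hf, ← Finset.mul_sum, sum_tail L s hs]

lemma dist_le (L m s : ℕ) (hs : s ≤ L) (w v : Fin L → Fin m)
    (h : ∀ k : Fin L, k.val < s → w k = v k) :
    hammingDist (psi L m w) (psi L m v) ≤ 2 * (2 ^ (L - s) - 1) := by
  rw [ham_psi, ← sum_cond L s hs]
  refine Finset.sum_le_sum fun j _ => ?_
  by_cases hj : s ≤ j.val
  · rw [if_pos hj]
    by_cases hp : pre w j = pre v j
    · rw [if_pos hp]
      exact Nat.zero_le _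
    · rw [if_neg hp]
  · have hpre : pre w j = pre v j := by
      funext k
      refine h (Fin.castLE j.isLt k) ?_
      have hk1 : k.val < j.val + 1 := k.isLt
      simp only [Fin.coe_castLE]
      omega
    rw [if_pos hpre, if_neg hj]

lemma dist_ge (L m : ℕ) (w v : Fin L → Fin m) (i : Fin L) (h : w i ≠ v i) :
    2 * 2 ^ (L - 1 - i.val) ≤ hammingDist (psi L m w) (psi L m v) := by
  rw [ham_psi]
  have hpre : pre w i ≠ pre v i := by
    intro he
    apply h
    have h2 := congrFun he ⟨i.val, Nat.lt_succ_self _⟩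
    simpa [pre, Fin.castLE, Fin.eta] using h2
  have key := Finset.single_le_sum
    (f := fun j : Fin L => if pre w j = pre v j then 0 else 2 * 2 ^ (L - 1 - j.val))
    (fun j _ => Nat.zero_le _) (Finset.mem_univ i)
  simpa [if_neg hpre] using key

lemma psi_inj (L m : ℕ) : Function.Injective (psi L m) := by
  intro w v h
  by_contra hne
  obtain ⟨i, hi⟩ := Function.ne_iff.mp hne
  have h1 := dist_ge L m w v i hi
  rw [h, hammingDist_self] at h1
  have : 0 < 2 * 2 ^ (L - 1 - i.val) := by positivity
  omega

lemma card_agree (L m : ℕ) (T : Finset (Fin L → Fin m)) (s : ℕ) (hs : s ≤ L)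
    (h : ∀ u ∈ T, ∀ v ∈ T, ∀ k : Fin L, k.val < s → u k = v k) :
    T.card ≤ m ^ (L - s) := by
  classical
  have key := Finset.card_le_card_of_injOn (s := T)
    (t := (Finset.univ : Finset (Fin (L - s) → Fin m)))
    (f := fun (w : Fin L → Fin m) (k : Fin (L - s)) =>
      w ⟨s + k.val, by have := k.isLt; omega⟩)
    (fun a _ => Finset.mem_univ _) ?_
  · calc T.card ≤ (Finset.univ : Finset (Fin (L - s) → Fin m)).card := key
      _ = m ^ (L - s) := by simp [Finset.card_univ]
  · intro u hu v hv heq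
    funext k
    by_cases hk : k.val < s
    · exact h u hu v hv k hk
    · have hks : s ≤ k.val := Nat.le_of_not_lt hk
      have hkL : k.val < L := k.isLt
      have hk2 : k.val - s < L - s := Nat.sub_lt_sub_right hks hkL
      have hval : s + (k.val - s) = k.val := Nat.add_sub_cancel' hks
      have hk3 : s + (k.val - s) < L := by rw [hval]; exact hkL
      have h2 : u (⟨s + (k.val - s), hk3⟩ : Fin L) = v (⟨s + (k.val - s), hk3⟩ : Fin L) :=
        congrFun heq ⟨k.val - s, hk2⟩
      have hkk : k = (⟨s + (k.val - s), hk3⟩ : Fin L) := Fin.ext hval.symm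
      rw [hkk]
      exact h2
end S10

theorem stmt_10 (α C lam : ℝ) (hα : 0 < α) (hC : 1 ≤ C) (hlam : 1 < lam) :
    ∃ p n : ℕ, 0 < p ∧ 0 < n ∧
      ∃ K : Finset (Fin n → Bool),
        lam ^ p ≤ (K.card : ℝ) ∧
        (∀ v ∈ K, wt v = p) ∧
        ∀ K' ⊆ K, (K.card : ℝ) ^ α ≤ (K'.card : ℝ) → C < dr K' := by
  classical
  -- choose t with 2C < 2^t and t ≥ 1
  obtain ⟨t0, ht0⟩ := pow_unbounded_of_one_lt (2 * C) (one_lt_two : (1:ℝ) < 2)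
  set t : ℕ := t0 + 1 with htdef
  have ht2C : 2 * C < 2 ^ t :=
    lt_of_lt_of_le ht0 (pow_le_pow_right₀ one_le_two (Nat.le_succ t0))
  have ht1 : 1 ≤ t := Nat.le_add_left 1 t0
  -- choose L with t < α * L
  set Lp : ℕ := ⌈((t : ℝ) + 1) / α⌉₊ with hLdef
  have hLα : (t : ℝ) < α * Lp := by
    have h1 : ((t : ℝ) + 1) / α ≤ (Lp : ℝ) := Nat.le_ceil _
    rw [div_le_iff₀ hα] at h1
    nlinarith
  have hL1 : 1 ≤ Lp := by
    rcases Nat.eq_zero_or_pos Lp with h | h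
    · rw [h] at hLα
      have ht0' : (0:ℝ) ≤ (t:ℝ) := Nat.cast_nonneg t
      simp at hLα
      linarith
    · exact h
  set p : ℕ := 2 ^ Lp - 1 with hpdef
  have hp : 0 < p := by
    have h2 : 2 ≤ 2 ^ Lp := by
      calc 2 = 2 ^ 1 := rfl
        _ ≤ 2 ^ Lp := Nat.pow_le_pow_right (by norm_num) hL1
    omega
  set m : ℕ := max 2 ⌈lam ^ p⌉₊ with hmdef
  have hm2 : 2 ≤ m := le_max_left _ _
  have hmlam : lam ^ p ≤ (m : ℝ) := by
    calc lam ^ p ≤ (⌈lam ^ p⌉₊ : ℝ) := Nat.le_ceil _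
      _ ≤ (m : ℝ) := by
          have := le_max_right 2 ⌈lam ^ p⌉₊
          exact_mod_cast this
  have hinj := S10.psi_inj Lp m
  have hn : 0 < Fintype.card (S10.Idx Lp m) := by
    refine Fintype.card_pos_iff.mpr ⟨⟨⟨0, by omega⟩, ⟨⟨0, by positivity⟩, fun _ => ⟨0, by omega⟩⟩⟩⟩
  refine ⟨p, Fintype.card (S10.Idx Lp m), hp, hn,
    Finset.image (S10.psi Lp m) Finset.univ, ?_, ?_, ?_⟩
  case _ =>
    -- cardinality at least lam ^ p
    rw [Finset.card_image_of_injective _ hinj, Finset.card_univ]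
    have hcard : Fintype.card (Fin Lp → Fin m) = m ^ Lp := by
      simp [Fintype.card_fun]
    rw [hcard]
    have h1 : (m : ℝ) ≤ (m : ℝ) ^ Lp := le_self_pow₀ (by exact_mod_cast le_trans one_le_two hm2) (by omega)
    have h2 : ((m ^ Lp : ℕ) : ℝ) = (m : ℝ) ^ Lp := by push_cast; ring
    rw [h2]
    exact le_trans hmlam h1
  case _ =>
    -- weights
    intro x hx
    obtain ⟨w, _, rfl⟩ := Finset.mem_image.mp hx
    rw [S10.wt_psi]
    rw [Fin.sum_univ_eq_sum_range (fun j => 2 ^ (Lp - 1 - j))]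
    have : Finset.range Lp = Finset.Ico 0 Lp := by
      ext j; simp
    rw [this, S10.sum_tail Lp 0 (Nat.zero_le _)]
    simp [hpdef]
  case _ =>
    intro K' hsub hcard
    have hKcard : (Finset.image (S10.psi Lp m) Finset.univ).card = m ^ Lp := by
      rw [Finset.card_image_of_injective _ hinj, Finset.card_univ]
      simp [Fintype.card_fun]
    -- transfer K' to a set of words
    set T : Finset (Fin Lp → Fin m) :=
      Finset.univ.filter (fun w => S10.psi Lp m w ∈ K') with hTdef
    have himg : Finset.image (S10.psi Lp m) T = K' := by
      ext x
      simp only [Finset.mem_image, hTdef, Finset.mem_filter, Finset.mem_univ, true_and]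
      constructor
      · rintro ⟨w, hw, rfl⟩; exact hw
      · intro hx
        obtain ⟨w, _, rfl⟩ := Finset.mem_image.mp (hsub hx)
        exact ⟨w, hx, rfl⟩
    have hTc : T.card = K'.card := by
      rw [← himg, Finset.card_image_of_injective _ hinj]
    -- T is big
    have hm1R : (1 : ℝ) < (m : ℝ) := by exact_mod_cast lt_of_lt_of_le one_lt_two hm2
    have hTbig : m ^ t < T.card := by
      have h1 : ((m : ℝ) ^ t) < ((m ^ Lp : ℕ) : ℝ) ^ α := by
        have e1 : ((m ^ Lp : ℕ) : ℝ) ^ α = (m : ℝ) ^ ((Lp : ℝ) * α) := by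
          push_cast
          rw [← Real.rpow_natCast (m : ℝ) Lp, ← Real.rpow_mul (by linarith)]
        have e2 : (m : ℝ) ^ t = (m : ℝ) ^ ((t : ℕ) : ℝ) := (Real.rpow_natCast _ _).symm
        rw [e1, e2]
        rw [Real.rpow_lt_rpow_left_iff hm1R]
        rw [mul_comm] at hLα
        exact hLα
      rw [hKcard] at hcard
      have h2 : ((m : ℝ) ^ t) < (T.card : ℝ) := by
        rw [hTc]
        exact lt_of_lt_of_le h1 hcard
      exact_mod_cast h2
    -- two distinct elements of T
    have hT2 : 1 < T.card := by
      have : 2 ≤ m ^ t := le_trans hm2 (Nat.le_self_pow (by omega) m)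
      omega
    obtain ⟨a, ha, b, hb, hab⟩ := Finset.one_lt_card.mp hT2
    -- the splitting level
    set Pd : ℕ → Prop :=
      fun i => ∀ u ∈ T, ∀ v ∈ T, ∀ k : Fin Lp, k.val < i → u k = v k with hPdef
    have hex : ∃ i, ¬ Pd (i + 1) := by
      obtain ⟨k, hk⟩ := Function.ne_iff.mp hab
      exact ⟨k.val, fun hP => hk (hP a ha b hb k (Nat.lt_succ_self _))⟩
    set i₀ : ℕ := Nat.find hex with hi₀def
    have hni : ¬ Pd (i₀ + 1) := Nat.find_spec hex
    have hPi₀ : Pd i₀ := by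
      rcases Nat.eq_zero_or_pos i₀ with h | h
      · rw [h]
        intro u _ v _ k hk
        exact absurd hk (Nat.not_lt_zero _)
      · have h1 := Nat.find_min hex (show i₀ - 1 < i₀ by omega)
        rw [show i₀ - 1 + 1 = i₀ by omega] at h1
        exact not_not.mp h1
    have hni' : ¬ (∀ u ∈ T, ∀ v ∈ T, ∀ k : Fin Lp, k.val < i₀ + 1 → u k = v k) := hni
    push_neg at hni'
    obtain ⟨u₁, hu₁, v₁, hv₁, k₁, hk₁, hne₁⟩ := hni' 
    have hk₁i₀ : k₁.val = i₀ := by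
      by_contra hcon
      exact hne₁ (hPi₀ u₁ hu₁ v₁ hv₁ k₁ (by omega))
    have hi₀L : i₀ < Lp := by have := k₁.isLt; omega
    -- T is small in terms of i₀
    have hTle : T.card ≤ m ^ (Lp - i₀) := S10.card_agree Lp m T i₀ (le_of_lt hi₀L) hPi₀
    have htLi : t < Lp - i₀ :=
      (Nat.pow_lt_pow_iff_right (lt_of_lt_of_le one_lt_two hm2)).mp
        (lt_of_lt_of_le hTbig hTle)
    have hs'L : i₀ + t < Lp := by omega
    -- pigeonhole for a close pair
    have hidx : ∀ k : Fin t, i₀ + k.val < Lp := fun k => by have := k.isLt; omega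
    have hcardt : (Finset.univ : Finset (Fin t → Fin m)).card < T.card := by
      have : (Finset.univ : Finset (Fin t → Fin m)).card = m ^ t := by
        simp [Fintype.card_fun]
      omega
    obtain ⟨u₂, hu₂, v₂, hv₂, hne₂, heq₂⟩ :=
      Finset.exists_ne_map_eq_of_card_lt_of_maps_to hcardt
        (f := fun (w : Fin Lp → Fin m) (k : Fin t) => w ⟨i₀ + k.val, hidx k⟩)
        (fun a _ => Finset.mem_univ _)
    have hagree : ∀ k : Fin Lp, k.val < i₀ + t → u₂ k = v₂ k := by
      intro k hk
      by_cases h : k.val < i₀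
      · exact hPi₀ u₂ hu₂ v₂ hv₂ k h
      · have hks : i₀ ≤ k.val := Nat.le_of_not_lt h
        have hk2 : k.val - i₀ < t := (tsub_lt_iff_left hks).mpr hk
        have hval : i₀ + (k.val - i₀) = k.val := Nat.add_sub_cancel' hks
        have hk3 : i₀ + (k.val - i₀) < Lp := by rw [hval]; exact k.isLt
        have h2 : u₂ (⟨i₀ + (k.val - i₀), hk3⟩ : Fin Lp)
            = v₂ (⟨i₀ + (k.val - i₀), hk3⟩ : Fin Lp) := congrFun heq₂ ⟨k.val - i₀, hk2⟩
        have hkk : k = (⟨i₀ + (k.val - i₀), hk3⟩ : Fin Lp) := Fin.ext hval.symm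
        rw [hkk]
        exact h2
    -- distance facts
    have hdist_close : hammingDist (S10.psi Lp m u₂) (S10.psi Lp m v₂)
        ≤ 2 * (2 ^ (Lp - (i₀ + t)) - 1) :=
      S10.dist_le Lp m (i₀ + t) (le_of_lt hs'L) u₂ v₂ hagree
    have hdist_far : 2 * 2 ^ (Lp - 1 - i₀)
        ≤ hammingDist (S10.psi Lp m u₁) (S10.psi Lp m v₁) := by
      have := S10.dist_ge Lp m u₁ v₁ k₁ hne₁
      rwa [hk₁i₀] at this
    have hpsi_ne : S10.psi Lp m u₂ ≠ S10.psi Lp m v₂ := fun h => hne₂ (hinj h)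
    have hmemu₂ : S10.psi Lp m u₂ ∈ K' := (Finset.mem_filter.mp hu₂).2
    have hmemv₂ : S10.psi Lp m v₂ ∈ K' := (Finset.mem_filter.mp hv₂).2
    have hmemu₁ : S10.psi Lp m u₁ ∈ K' := (Finset.mem_filter.mp hu₁).2
    have hmemv₁ : S10.psi Lp m v₁ ∈ K' := (Finset.mem_filter.mp hv₁).2
    -- now bound dr
    set A : Set ℕ := {d : ℕ | ∃ x ∈ K', ∃ y ∈ K', hammingDist x y = d} with hAdef
    set B : Set ℕ := {d : ℕ | ∃ x ∈ K', ∃ y ∈ K', x ≠ y ∧ hammingDist x y = d} with hBdef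
    have hBmem : hammingDist (S10.psi Lp m u₂) (S10.psi Lp m v₂) ∈ B :=
      ⟨_, hmemu₂, _, hmemv₂, hpsi_ne, rfl⟩
    have hBne : B.Nonempty := ⟨_, hBmem⟩
    have hbpos : 0 < sInf B := by
      obtain ⟨x, _, y, _, hxy, hd⟩ := Nat.sInf_mem hBne
      rw [← hd]
      exact hammingDist_pos.mpr hxy
    have hble : sInf B ≤ 2 * (2 ^ (Lp - (i₀ + t)) - 1) :=
      le_trans (Nat.sInf_le hBmem) hdist_close
    have hAbdd : BddAbove A := by
      refine ⟨Fintype.card (S10.Idx Lp m), ?_⟩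
      rintro d ⟨x, _, y, _, rfl⟩
      have := hammingDist_le_card_fintype (x := x) (y := y)
      simpa using this
    have hage : 2 * 2 ^ (Lp - 1 - i₀) ≤ sSup A :=
      le_trans hdist_far (le_csSup hAbdd ⟨_, hmemu₁, _, hmemv₁, rfl⟩)
    -- final computation
    show C < dr K'
    have hgoal : C < ((sSup A : ℕ) : ℝ) / ((sInf B : ℕ) : ℝ) := by
      have hbR : (0 : ℝ) < ((sInf B : ℕ) : ℝ) := by exact_mod_cast hbpos
      rw [lt_div_iff₀ hbR]
      have hA : 2 * (2:ℝ) ^ (Lp - 1 - i₀) ≤ ((sSup A : ℕ) : ℝ) := by exact_mod_cast hage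
      have hB : ((sInf B : ℕ) : ℝ) ≤ 2 * ((2:ℝ) ^ (Lp - (i₀ + t)) - 1) := by
        have h1 : (1 : ℕ) ≤ 2 ^ (Lp - (i₀ + t)) := Nat.one_le_two_pow
        calc ((sInf B : ℕ) : ℝ) ≤ ((2 * (2 ^ (Lp - (i₀ + t)) - 1) : ℕ) : ℝ) := by
              exact_mod_cast hble
          _ = 2 * ((2:ℝ) ^ (Lp - (i₀ + t)) - 1) := by
              rw [Nat.cast_mul, Nat.cast_sub h1]
              push_cast
              ring
      have hkey : (2:ℝ) ^ t * (2:ℝ) ^ (Lp - (i₀ + t)) = 2 * (2:ℝ) ^ (Lp - 1 - i₀) := by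
        rw [← pow_add, show t + (Lp - (i₀ + t)) = (Lp - 1 - i₀) + 1 from by omega, pow_succ]
        ring
      have h2t : (0:ℝ) < 2 ^ t := by positivity
      have hXpos : (1:ℝ) ≤ 2 ^ (Lp - (i₀ + t)) := one_le_pow₀ (by norm_num)
      have hC0 : (0:ℝ) ≤ C := le_trans zero_le_one hC
      calc C * ((sInf B : ℕ) : ℝ)
          ≤ C * (2 * ((2:ℝ) ^ (Lp - (i₀ + t)) - 1)) := by
            apply mul_le_mul_of_nonneg_left hB hC0
        _ = (2 * C) * ((2:ℝ) ^ (Lp - (i₀ + t)) - 1) := by ring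
        _ ≤ 2 ^ t * ((2:ℝ) ^ (Lp - (i₀ + t)) - 1) :=
            mul_le_mul_of_nonneg_right ht2C.le (by linarith)
        _ = 2 ^ t * (2:ℝ) ^ (Lp - (i₀ + t)) - 2 ^ t := by ring
        _ < 2 ^ t * (2:ℝ) ^ (Lp - (i₀ + t)) := by linarith
        _ = 2 * (2:ℝ) ^ (Lp - 1 - i₀) := hkey
        _ ≤ ((sSup A : ℕ) : ℝ) := hA
    exact hgoal
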